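/- Let ℓ, r ∈ ℕ₀ and let m ≥ 4+2ℓ be even. If z = x+iy ∈ ℍ satisfies y > Im(M𝔷) for all M ∈ SL₂(ℤ), then H^{(r)}_{m,ℓ}(𝔷,z) = 2πi Σ_{n≥0} Σ_{c,d∈ℤ, gcd(c,d)=1} (|c𝔷+d|²/𝔷₂)^ℓ (2πin)^r B_{m,c,d}(𝔷,n) q^n. -/

import Mathlib

open Complex Real Filter Topology

namespace RamanujanMero

noncomputable section

/-- `ρ = e^{πi/3}`. -/
def rho : ℂ := Complex.exp ((π : ℂ) * Complex.I / 3)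

/-- `e(t) = e^{2πit}` for real `t`. -/
def eR (t : ℝ) : ℂ := Complex.exp (2 * (π : ℂ) * Complex.I * (t : ℂ))

/-- `q = e^{2πiz}`. -/
def qexp (z : ℂ) : ℂ := Complex.exp (2 * (π : ℂ) * Complex.I * z)

-- A chosen completion `(a,b)` of `(c,d)` to a unimodular pair: `a*d - b*c = 1`.
open scoped Classical in
def completion (c d : ℤ) : ℤ × ℤ :=
  if h : ∃ p : ℤ × ℤ, p.1 * d - p.2 * c = 1 then h.choose else (0, 0)

/-- The Möbius image `M𝔷 = (a𝔷+b)/(c𝔷+d)` for the coset of `Γ∞\SL₂(ℤ)` with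
bottom row `(c,d)`, using the chosen completion. -/
def moeb (c d : ℤ) (𝔷 : ℂ) : ℂ :=
  (((completion c d).1 : ℂ) * 𝔷 + ((completion c d).2 : ℂ)) / ((c : ℂ) * 𝔷 + (d : ℂ))

/-- Coprime pairs of integers, parametrizing `Γ∞\SL₂(ℤ)` by bottom rows. -/
def CoprimePair : Type := {p : ℤ × ℤ // IsCoprime p.1 p.2}

/-- The Poincaré series `H_{m,ℓ}(𝔷,z)`. -/
def Hml (m ℓ : ℕ) (𝔷 z : ℂ) : ℂ :=
  2 * (π : ℂ) * Complex.I *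
    ∑' p : CoprimePair,
      ((((moeb p.1.1 p.1.2 𝔷).im ^ ℓ)⁻¹ : ℝ) : ℂ) *
        (((p.1.1 : ℂ) * 𝔷 + (p.1.2 : ℂ)) ^ m)⁻¹ *
        (1 - Complex.exp (2 * (π : ℂ) * Complex.I * (z - moeb p.1.1 p.1.2 𝔷)))⁻¹

/-- `H^{(r)}_{m,ℓ}(𝔷,z) = ∂^r/∂z^r H_{m,ℓ}(𝔷,z)`. -/
def Hder (m ℓ r : ℕ) (𝔷 z : ℂ) : ℂ := iteratedDeriv r (Hml m ℓ 𝔷) z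

/-- The differential operator `∂/∂X_𝔷(α) = ((α-𝔷̄)²/(2i𝔷₂)) ∂/∂α`. -/
def Xderiv (𝔷 : ℂ) (f : ℂ → ℂ) : ℂ → ℂ :=
  fun α => ((α - (starRingEnd ℂ) 𝔷) ^ 2 / (2 * Complex.I * (𝔷.im : ℂ))) * deriv f α

/-- `Y_{2−m,ν}(𝔷,z)` for `ν ∈ -ℕ`. -/
def Yser (m : ℕ) (ν : ℤ) (𝔷 z : ℂ) : ℂ :=
  ((((-ν - 1).toNat.factorial : ℕ) : ℂ))⁻¹ *
    ((Xderiv 𝔷)^[(-ν - 1).toNat]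
      (fun α => (α - (starRingEnd ℂ) 𝔷) ^ m * Hml m 0 α z)) 𝔷

/-- `B_{m,c,d}(𝔷,n)`. -/
def Bcd (m : ℕ) (c d : ℤ) (𝔷 : ℂ) (n : ℕ) : ℂ :=
  (((c : ℂ) * 𝔷 + (d : ℂ)) ^ m)⁻¹ *
    ((Real.exp (2 * π * n * 𝔷.im / Complex.normSq ((c : ℂ) * 𝔷 + (d : ℂ))) : ℝ) : ℂ) *
    eR (-(n * ((((completion c d).1 * c : ℤ) : ℝ) * Complex.normSq 𝔷 +
        (((completion c d).2 * d : ℤ) : ℝ) +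
        𝔷.re * (((completion c d).1 * d + (completion c d).2 * c : ℤ) : ℝ)) /
          Complex.normSq ((c : ℂ) * 𝔷 + (d : ℂ))))

/-- The ring of integers `ℤ[𝔷]` of `ℚ(𝔷)`, as a subring of `ℂ` (for `𝔷 ∈ {i, ρ}`). -/
def ringOf (𝔷 : ℂ) : Subring ℂ := Subring.closure {𝔷}

/-- `𝔷` as an element of `ℤ[𝔷]`. -/
def zel (𝔷 : ℂ) : ringOf 𝔷 := ⟨𝔷, Subring.subset_closure (Set.mem_singleton 𝔷)⟩

/-- The norm of an ideal. -/
def inorm (𝔷 : ℂ) (b : Ideal (ringOf 𝔷)) : ℕ := Nat.card (↥(ringOf 𝔷) ⧸ b)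

/-- An ideal is primitive if it is not divisible by (i.e. contained in) any ideal `(g)`
with `g ∈ ℤ`, `g ≥ 2`. -/
def IsPrimitiveIdeal {R : Type*} [CommRing R] (b : Ideal R) : Prop :=
  ∀ g : ℤ, 2 ≤ g → ¬ b ≤ Ideal.span {(g : R)}

/-- Nonzero primitive ideals of `ℤ[𝔷]`. -/
def PrimIdeal (𝔷 : ℂ) : Type := {b : Ideal (ringOf 𝔷) // b ≠ ⊥ ∧ IsPrimitiveIdeal b}

-- A chosen coprime pair `(c,d)` with `b = (c𝔷 + d)`.
open scoped Classical in
def genPair (𝔷 : ℂ) (b : Ideal (ringOf 𝔷)) : ℤ × ℤ :=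
  if h : ∃ p : ℤ × ℤ, IsCoprime p.1 p.2 ∧
      b = Ideal.span {(p.1 : ringOf 𝔷) * zel 𝔷 + (p.2 : ringOf 𝔷)} then h.choose else (1, 0)

/-- `ω_𝔷`, the order of the stabilizer of `𝔷` in `PSL₂(ℤ)` (for `𝔷 ∈ {i, ρ}`). -/
def omegaZ (𝔷 : ℂ) : ℕ := if 𝔷 = Complex.I then 2 else 3

/-- `C_k(b,n)`, for a primitive ideal `b` of `ℤ[i]` (if `𝔷 = i`) resp. `ℤ[ρ]`. -/
def Cfun (𝔷 : ℂ) (k : ℕ) (b : Ideal (ringOf 𝔷)) (n : ℕ) : ℝ :=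
  let c : ℤ := (genPair 𝔷 b).1
  let d : ℤ := (genPair 𝔷 b).2
  let a : ℤ := (completion c d).1
  let b' : ℤ := (completion c d).2
  if 𝔷 = Complex.I then
    Real.cos (2 * π * n * ((a * c + b' * d : ℤ) : ℝ) / (inorm 𝔷 b) +
      k * Real.arctan ((c : ℝ) / (d : ℝ)))
  else
    (-1 : ℝ) ^ n *
      Real.cos (π * n * ((a * d + b' * c - 2 * a * c - 2 * b' * d : ℤ) : ℝ) / (inorm 𝔷 b) +
        π * n - k * Real.arctan ((c : ℝ) * Real.sqrt 3 / (2 * (d : ℝ) - (c : ℝ))))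

/-- The series `F_{k,ℓ,r}(𝔷;q)`. -/
def Fser (k ℓ r : ℕ) (𝔷 z : ℂ) : ℂ :=
  ∑' n : ℕ,
    (∑' b : PrimIdeal 𝔷,
      ((Cfun 𝔷 k b.1 n * (inorm 𝔷 b.1 : ℝ) ^ ((ℓ : ℝ) - (k : ℝ) / 2) * (n : ℝ) ^ r *
        Real.exp (2 * π * n * 𝔷.im / (inorm 𝔷 b.1)) : ℝ) : ℂ)) * qexp z ^ n

/-- The quasimodular Eisenstein series `E₂`. -/
def E2 (z : ℂ) : ℂ :=
  1 - 24 * ∑' n : ℕ, ((ArithmeticFunction.sigma 1 (n + 1) : ℕ) : ℂ) * qexp z ^ (n + 1)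

/-- The Eisenstein series `E₄`. -/
def E4 (z : ℂ) : ℂ :=
  1 + 240 * ∑' n : ℕ, ((ArithmeticFunction.sigma 3 (n + 1) : ℕ) : ℂ) * qexp z ^ (n + 1)

/-- The Eisenstein series `E₆`. -/
def E6 (z : ℂ) : ℂ :=
  1 - 504 * ∑' n : ℕ, ((ArithmeticFunction.sigma 5 (n + 1) : ℕ) : ℂ) * qexp z ^ (n + 1)

/-- The modular completion `Ê₂` of `E₂`. -/
def E2hat (z : ℂ) : ℂ := E2 z - 3 / ((π : ℂ) * (z.im : ℂ))

/-- The discriminant function `Δ`. -/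
def Δfun (z : ℂ) : ℂ := (E4 z ^ 3 - E6 z ^ 2) / 1728

/-- The `j`-invariant. -/
def jfun (z : ℂ) : ℂ := E4 z ^ 3 / Δfun z

/-- `SL₂(ℤ)`. -/
abbrev SL2Z := Matrix.SpecialLinearGroup (Fin 2) ℤ

/-- The Möbius action of `SL₂(ℤ)` on `ℂ` (partial; used on the upper half-plane). -/
def act (M : SL2Z) (z : ℂ) : ℂ :=
  (((M.1 0 0 : ℤ) : ℂ) * z + ((M.1 0 1 : ℤ) : ℂ)) /
    (((M.1 1 0 : ℤ) : ℂ) * z + ((M.1 1 1 : ℤ) : ℂ))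

/-- A meromorphic modular form of weight `κ` for `SL₂(ℤ)`, holomorphic at `i∞`,
whose only poles modulo `SL₂(ℤ)` are at `z = 𝔷` and have order at most `ν`. -/
structure IsMeroModularPoles (κ : ℤ) (𝔷 : ℂ) (ν : ℕ) (F : ℂ → ℂ) : Prop where
  transform : ∀ M : SL2Z, ∀ z : ℂ, 0 < z.im →
    F (act M z) = (((M.1 1 0 : ℤ) : ℂ) * z + ((M.1 1 1 : ℤ) : ℂ)) ^ κ * F z
  holo : ∀ z : ℂ, 0 < z.im → (∀ M : SL2Z, z ≠ act M 𝔷) → AnalyticAt ℂ F z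
  pole : ∀ z : ℂ, 0 < z.im → (∃ M : SL2Z, z = act M 𝔷) →
    ∃ g : ℂ → ℂ, AnalyticAt ℂ g z ∧ ∀ᶠ w in nhdsWithin z {z}ᶜ, F w = g w / (w - z) ^ ν
  bounded_at_inf : ∃ C Y : ℝ, ∀ z : ℂ, Y < z.im → ‖F z‖ ≤ C

/-- A meromorphic cusp form of weight `m` for `SL₂(ℤ)` whose only poles modulo
`SL₂(ℤ)` are at the point `z₀` and have order at most `ν`. -/
structure IsMeroCuspFormPoles (m : ℕ) (z₀ : ℂ) (ν : ℕ) (G : ℂ → ℂ) : Prop where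
  transform : ∀ M : SL2Z, ∀ z : ℂ, 0 < z.im →
    G (act M z) = (((M.1 1 0 : ℤ) : ℂ) * z + ((M.1 1 1 : ℤ) : ℂ)) ^ m * G z
  holo : ∀ z : ℂ, 0 < z.im → (∀ M : SL2Z, z ≠ act M z₀) → AnalyticAt ℂ G z
  pole : ∀ z : ℂ, 0 < z.im → (∃ M : SL2Z, z = act M z₀) →
    ∃ g : ℂ → ℂ, AnalyticAt ℂ g z ∧ ∀ᶠ w in nhdsWithin z {z}ᶜ, G w = g w / (w - z) ^ ν
  zero_at_inf : Tendsto G (comap Complex.im atTop) (nhds 0)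

/-- A holomorphic cusp form of weight `m` for `SL₂(ℤ)`. -/
structure IsCuspForm (m : ℕ) (f : ℂ → ℂ) : Prop where
  holo : ∀ z : ℂ, 0 < z.im → AnalyticAt ℂ f z
  transform : ∀ M : SL2Z, ∀ z : ℂ, 0 < z.im →
    f (act M z) = (((M.1 1 0 : ℤ) : ℂ) * z + ((M.1 1 1 : ℤ) : ℂ)) ^ m * f z
  zero_at_inf : Tendsto f (comap Complex.im atTop) (nhds 0)

/-- `𝓕^{(r)}_{m,ℓ}(𝔷,z)`. -/
def Fcal (m ℓ r : ℕ) (𝔷 z : ℂ) : ℂ :=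
  ∑ j ∈ Finset.range (ℓ + 1),
    ((ℓ.choose j : ℕ) : ℂ) * (3 / (π : ℂ)) ^ (ℓ - j) * E2hat 𝔷 ^ j * Hder (m - 2 * j) (ℓ - j) r 𝔷 z



-- ==== auxiliary definitions ====
private def Apt (𝔷 : ℂ) (p : CoprimePair) : ℂ := (p.1.1 : ℂ) * 𝔷 + (p.1.2 : ℂ)

private def wpt (𝔷 : ℂ) (p : CoprimePair) : ℂ := moeb p.1.1 p.1.2 𝔷

private def cco (m ℓ : ℕ) (𝔷 : ℂ) (p : CoprimePair) : ℂ :=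
  (((Complex.normSq (Apt 𝔷 p) / 𝔷.im) ^ ℓ : ℝ) : ℂ) * (Apt 𝔷 p ^ m)⁻¹

private def mu (n : ℕ) : ℂ := 2 * (π : ℂ) * Complex.I * (n : ℂ)

private def Eterm (m ℓ : ℕ) (𝔷 : ℂ) (k : ℕ) (x : CoprimePair × ℕ) (v : ℂ) : ℂ :=
  mu x.2 ^ k * ((cco m ℓ 𝔷 x.1 * Complex.exp (-(mu x.2) * wpt 𝔷 x.1)) *
    Complex.exp (mu x.2 * v))

private lemma completion_det {c d : ℤ} (h : IsCoprime c d) :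
    (completion c d).1 * d - (completion c d).2 * c = 1 := by
  obtain ⟨u, v, huv⟩ := h
  have hex : ∃ p : ℤ × ℤ, p.1 * d - p.2 * c = 1 := ⟨(v, -u), by dsimp only; linarith⟩
  unfold completion
  rw [dif_pos hex]
  exact hex.choose_spec

private lemma Apt_ne {𝔷 : ℂ} (h𝔷 : 0 < 𝔷.im) (p : CoprimePair) : Apt 𝔷 p ≠ 0 := by
  intro h
  have h1 := congrArg Complex.im h
  have h2 := congrArg Complex.re h
  simp [Apt] at h1 h2
  have hc' : p.1.1 = 0 := by
    rcases h1 with h1 | h1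
    · exact h1
    · exact absurd h1 h𝔷.ne'
  rw [hc'] at h2
  simp at h2
  have hcop := p.2
  rw [hc', h2] at hcop
  simpa [isCoprime_zero_left] using hcop
private lemma moeb_formula {a b c d : ℤ} {z : ℂ} (hdet : a * d - b * c = 1)
    (hw : (c : ℂ) * z + (d : ℂ) ≠ 0) :
    ((a : ℂ) * z + (b : ℂ)) / ((c : ℂ) * z + (d : ℂ)) =
      ((((a * c : ℤ) : ℝ) * Complex.normSq z + ((b * d : ℤ) : ℝ) +
          z.re * ((a * d + b * c : ℤ) : ℝ) : ℝ) +
        (z.im : ℂ) * Complex.I) / ((Complex.normSq ((c : ℂ) * z + (d : ℂ)) : ℝ) : ℂ) := by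
  have hN : ((Complex.normSq ((c : ℂ) * z + (d : ℂ)) : ℝ) : ℂ) ≠ 0 :=
    Complex.ofReal_ne_zero.mpr (Complex.normSq_pos.mpr hw).ne'
  have hdet' : ((a : ℂ) * d - b * c) = 1 := by exact_mod_cast congrArg (Int.cast : ℤ → ℂ) hdet
  rw [div_eq_div_iff hw hN]
  push_cast
  simp only [← Complex.mul_conj]
  have hre : (z.re : ℂ) = (z + (starRingEnd ℂ) z) / 2 := by
    rw [Complex.add_conj]; push_cast; ring
  have him : (z.im : ℂ) * Complex.I = (z - (starRingEnd ℂ) z) / 2 := by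
    rw [Complex.sub_conj]; push_cast; ring
  rw [hre, him]
  simp only [map_add, map_mul, Complex.conj_ofReal, map_intCast]
  linear_combination ((z - (starRingEnd ℂ) z) / 2 * ((c : ℂ) * z + d)) * hdet'

private lemma wpt_eq {𝔷 : ℂ} (h𝔷 : 0 < 𝔷.im) (p : CoprimePair) :
    wpt 𝔷 p = (((((completion p.1.1 p.1.2).1 * p.1.1 : ℤ) : ℝ) * Complex.normSq 𝔷 +
          (((completion p.1.1 p.1.2).2 * p.1.2 : ℤ) : ℝ) +
          𝔷.re * (((completion p.1.1 p.1.2).1 * p.1.2 + (completion p.1.1 p.1.2).2 * p.1.1 : ℤ) : ℝ) : ℝ) +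
        (𝔷.im : ℂ) * Complex.I) / ((Complex.normSq (Apt 𝔷 p) : ℝ) : ℂ) := by
  have hdet := completion_det p.2
  have hw : Apt 𝔷 p ≠ 0 := Apt_ne h𝔷 p
  unfold Apt at hw ⊢
  unfold wpt moeb
  exact moeb_formula hdet hw

private lemma wpt_im {𝔷 : ℂ} (h𝔷 : 0 < 𝔷.im) (p : CoprimePair) :
    (wpt 𝔷 p).im = 𝔷.im / Complex.normSq (Apt 𝔷 p) := by
  rw [wpt_eq h𝔷 p, Complex.div_ofReal_im]
  simp

private lemma Bcd_eq {m : ℕ} {𝔷 : ℂ} (h𝔷 : 0 < 𝔷.im) (p : CoprimePair) (n : ℕ) :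
    Bcd m p.1.1 p.1.2 𝔷 n = (Apt 𝔷 p ^ m)⁻¹ * Complex.exp (-(mu n) * wpt 𝔷 p) := by
  have hN : (0:ℝ) < Complex.normSq (Apt 𝔷 p) := Complex.normSq_pos.mpr (Apt_ne h𝔷 p)
  have hNC : ((Complex.normSq (Apt 𝔷 p) : ℝ) : ℂ) ≠ 0 := Complex.ofReal_ne_zero.mpr hN.ne'
  unfold Bcd eR mu
  rw [wpt_eq h𝔷 p]
  unfold Apt at *
  rw [Complex.ofReal_exp, mul_assoc, ← Complex.exp_add]
  congr 2
  push_cast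
  field_simp
  ring_nf
  simp only [Complex.I_sq]
  ring

private lemma cco_norm_le {m ℓ : ℕ} {𝔷 : ℂ} (h𝔷 : 0 < 𝔷.im) (hm : 4 + 2 * ℓ ≤ m)
    (p : CoprimePair) :
    ‖cco m ℓ 𝔷 p‖ ≤ (𝔷.im ^ ℓ)⁻¹ *
      (EisensteinSeries.r ⟨𝔷, h𝔷⟩ ^ (-((m : ℝ) - 2 * ℓ)) *
        ‖![p.1.1, p.1.2]‖ ^ (-((m : ℝ) - 2 * ℓ))) := by
  have hA : 0 < ‖Apt 𝔷 p‖ := norm_pos_iff.mpr (Apt_ne h𝔷 p)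
  set k : ℝ := (m : ℝ) - 2 * ℓ with hk
  have h3 : ‖Apt 𝔷 p‖ ^ (-k) =
      (‖Apt 𝔷 p‖ ^ 2) ^ ℓ * (‖Apt 𝔷 p‖ ^ m)⁻¹ := by
    rw [← pow_mul, ← Real.rpow_natCast _ (2 * ℓ), ← Real.rpow_natCast _ m,
      ← Real.rpow_neg hA.le, ← Real.rpow_add hA]
    congr 1
    push_cast
    ring
  have heq : ‖cco m ℓ 𝔷 p‖ = (𝔷.im ^ ℓ)⁻¹ * ‖Apt 𝔷 p‖ ^ (-k) := by
    unfold cco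
    rw [norm_mul, Complex.norm_real,
      Real.norm_of_nonneg (pow_nonneg (div_nonneg (Complex.normSq_nonneg _) h𝔷.le) _),
      norm_inv, norm_pow, h3, div_pow, ← Complex.sq_norm]
    field_simp
  rw [heq]
  have hk0 : (0 : ℝ) ≤ k := by
    have : (4 : ℝ) + 2 * ℓ ≤ (m : ℝ) := by exact_mod_cast hm
    rw [hk]; linarith
  have hb := EisensteinSeries.summand_bound ⟨𝔷, h𝔷⟩ hk0 ![p.1.1, p.1.2]
  simp only [Matrix.cons_val_zero, Matrix.cons_val_one, Matrix.head_cons] at hb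
  refine mul_le_mul_of_nonneg_left ?_ (by positivity)
  exact hb

private lemma summable_cco {m ℓ : ℕ} {𝔷 : ℂ} (h𝔷 : 0 < 𝔷.im) (hm : 4 + 2 * ℓ ≤ m) :
    Summable fun p : CoprimePair => ‖cco m ℓ 𝔷 p‖ := by
  have hk : (2 : ℝ) < (m : ℝ) - 2 * ℓ := by
    have : (4 : ℝ) + 2 * ℓ ≤ (m : ℝ) := by exact_mod_cast hm
    linarith
  have hinj : Function.Injective (fun p : CoprimePair => (![p.1.1, p.1.2] : Fin 2 → ℤ)) := by
    intro p q h
    have h0 := congrFun h 0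
    have h1 := congrFun h 1
    simp at h0 h1
    exact Subtype.ext (Prod.ext h0 h1)
  have hs : Summable fun p : CoprimePair => (𝔷.im ^ ℓ)⁻¹ *
      (EisensteinSeries.r ⟨𝔷, h𝔷⟩ ^ (-((m : ℝ) - 2 * ℓ)) *
        ‖![p.1.1, p.1.2]‖ ^ (-((m : ℝ) - 2 * ℓ))) :=
    Summable.mul_left _
      (((EisensteinSeries.summable_one_div_norm_rpow hk).mul_left _).comp_injective hinj)
  exact Summable.of_nonneg_of_le (fun p => norm_nonneg _) (fun p => cco_norm_le h𝔷 hm p) hs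

private lemma mu_eq (n : ℕ) : mu n = ((2 * π * n : ℝ) : ℂ) * Complex.I := by
  unfold mu; push_cast; ring

private lemma norm_mu_pow (n k : ℕ) : ‖mu n ^ k‖ = (2 * π * n) ^ k := by
  rw [norm_pow, mu_eq, norm_mul, Complex.norm_real, Complex.norm_I, mul_one,
    Real.norm_of_nonneg (by positivity)]

private lemma norm_exp_mu_mul (n : ℕ) (v : ℂ) :
    ‖Complex.exp (mu n * v)‖ = Real.exp (-(2 * π * n * v.im)) := by
  rw [mu_eq, Complex.norm_exp]
  congr 1
  rw [mul_assoc, Complex.re_ofReal_mul, Complex.I_mul_re]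
  ring

private lemma norm_exp_neg_mu_mul (n : ℕ) (w : ℂ) :
    ‖Complex.exp (-(mu n) * w)‖ = Real.exp (2 * π * n * w.im) := by
  rw [mu_eq, Complex.norm_exp]
  congr 1
  rw [neg_mul, Complex.neg_re, mul_assoc, Complex.re_ofReal_mul, Complex.I_mul_re]
  ring

private lemma norm_Eterm (m ℓ : ℕ) (𝔷 : ℂ) (k : ℕ) (x : CoprimePair × ℕ) (v : ℂ) :
    ‖Eterm m ℓ 𝔷 k x v‖ = (2 * π * x.2) ^ k * (‖cco m ℓ 𝔷 x.1‖ *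
      (Real.exp (2 * π * x.2 * (wpt 𝔷 x.1).im) * Real.exp (-(2 * π * x.2 * v.im)))) := by
  unfold Eterm
  rw [norm_mul, norm_mul, norm_mul, norm_mu_pow, norm_exp_mu_mul, norm_exp_neg_mu_mul]
  ring

private lemma Eterm_hasDeriv (m ℓ : ℕ) (𝔷 : ℂ) (k : ℕ) (x : CoprimePair × ℕ) (v : ℂ) :
    HasDerivAt (Eterm m ℓ 𝔷 k x) (Eterm m ℓ 𝔷 (k + 1) x v) v := by
  have h1 : HasDerivAt (fun w : ℂ => Complex.exp (mu x.2 * w))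
      (Complex.exp (mu x.2 * v) * mu x.2) v := by
    simpa using ((hasDerivAt_id v).const_mul (mu x.2)).cexp
  have hfun : Eterm m ℓ 𝔷 k x = fun w =>
      (mu x.2 ^ k * (cco m ℓ 𝔷 x.1 * Complex.exp (-(mu x.2) * wpt 𝔷 x.1))) *
        Complex.exp (mu x.2 * w) := by
    funext w; unfold Eterm; ring
  rw [hfun]
  refine (h1.const_mul (mu x.2 ^ k * (cco m ℓ 𝔷 x.1 * Complex.exp (-(mu x.2) * wpt 𝔷 x.1)))).congr_deriv ?_
  unfold Eterm
  ring

private lemma exists_sl2 {𝔷 : ℂ} (p : CoprimePair) : ∃ M : SL2Z, act M 𝔷 = wpt 𝔷 p := by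
  have hdet := completion_det p.2
  refine ⟨⟨!![(completion p.1.1 p.1.2).1, (completion p.1.1 p.1.2).2; p.1.1, p.1.2], ?_⟩, ?_⟩
  · rw [Matrix.det_fin_two_of]; linarith
  · unfold act wpt moeb
    simp [Matrix.cons_val_zero, Matrix.cons_val_one, Matrix.head_cons]

private lemma int_abs_le_sq (c : ℤ) : |c| ≤ c ^ 2 := by
  rcases eq_or_ne c 0 with h | h
  · simp [h]
  · have h1 : 1 ≤ |c| := Int.one_le_abs h
    calc |c| = |c| * 1 := (mul_one _).symm
    _ ≤ |c| * |c| := mul_le_mul_of_nonneg_left h1 (abs_nonneg c)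
    _ = c ^ 2 := by rw [abs_mul_abs_self, sq]

private lemma finite_small {𝔷 : ℂ} (h𝔷 : 0 < 𝔷.im) (K : ℝ) :
    {p : CoprimePair | Complex.normSq (Apt 𝔷 p) ≤ K}.Finite := by
  have hfin2 : {q : ℤ × ℤ | Complex.normSq ((q.1 : ℂ) * 𝔷 + (q.2 : ℂ)) ≤ K}.Finite := by
    set Cr : ℝ := K / 𝔷.im ^ 2 with hCr
    set Dr : ℝ := 2 * K + 2 * Cr * 𝔷.re ^ 2 with hDr
    apply Set.Finite.subset (Set.finite_Icc ((-⌈Cr⌉, -⌈Dr⌉) : ℤ × ℤ) (⌈Cr⌉, ⌈Dr⌉))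
    rintro ⟨c, d⟩ hq
    simp only [Set.mem_setOf_eq] at hq
    have hexp : Complex.normSq ((c : ℂ) * 𝔷 + (d : ℂ)) =
        ((c : ℝ) * 𝔷.re + (d : ℝ)) ^ 2 + ((c : ℝ) * 𝔷.im) ^ 2 := by
      simp [Complex.normSq_apply, Complex.add_re, Complex.add_im, Complex.mul_re,
        Complex.mul_im]
      ring
    rw [hexp] at hq
    have hc2 : ((c : ℝ)) ^ 2 ≤ Cr := by
      rw [hCr, le_div_iff₀ (by positivity)]
      nlinarith [sq_nonneg ((c : ℝ) * 𝔷.re + (d : ℝ))]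
    have hd2 : ((d : ℝ)) ^ 2 ≤ Dr := by
      rw [hDr]
      nlinarith [sq_nonneg ((c : ℝ) * 𝔷.im), hc2, sq_nonneg 𝔷.re,
        sq_nonneg ((c : ℝ) * 𝔷.re + ((c : ℝ) * 𝔷.re + (d : ℝ))), mul_le_mul_of_nonneg_right hc2 (sq_nonneg 𝔷.re)]
    have hcC : |c| ≤ ⌈Cr⌉ := by
      have h1 : ((|c| : ℤ) : ℝ) ≤ ((c ^ 2 : ℤ) : ℝ) := by exact_mod_cast int_abs_le_sq c
      push_cast at h1
      have h2 : ((|c| : ℤ) : ℝ) ≤ (⌈Cr⌉ : ℝ) := by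
        push_cast
        calc (|c| : ℝ) = |(c : ℝ)| := by push_cast; rfl
        _ ≤ (c : ℝ) ^ 2 := by push_cast at h1 ⊢; linarith
        _ ≤ Cr := hc2
        _ ≤ ⌈Cr⌉ := Int.le_ceil _
      exact_mod_cast h2
    have hdD : |d| ≤ ⌈Dr⌉ := by
      have h1 : ((|d| : ℤ) : ℝ) ≤ ((d ^ 2 : ℤ) : ℝ) := by exact_mod_cast int_abs_le_sq d
      have h2 : ((|d| : ℤ) : ℝ) ≤ (⌈Dr⌉ : ℝ) := by
        push_cast at h1 ⊢
        calc |(d : ℝ)| ≤ (d : ℝ) ^ 2 := h1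
        _ ≤ Dr := hd2
        _ ≤ ⌈Dr⌉ := Int.le_ceil _
      exact_mod_cast h2
    rw [Set.mem_Icc]
    obtain ⟨hc1, hc2'⟩ := abs_le.mp hcC
    obtain ⟨hd1, hd2'⟩ := abs_le.mp hdD
    exact ⟨⟨hc1, hd1⟩, ⟨hc2', hd2'⟩⟩
  have hinj : Function.Injective (fun p : CoprimePair => (p.1 : ℤ × ℤ)) :=
    fun p q h => Subtype.ext h
  apply Set.Finite.subset
    (hfin2.preimage (Set.injOn_of_injective hinj))
  intro p hp
  exact hp

set_option maxHeartbeats 1000000 in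
/-- Fourier expansion of `H^{(r)}_{m,ℓ}(𝔷,z)` as a sum over coprime pairs. -/
theorem Hml_der_Fourier (ℓ r m : ℕ) (hm : 4 + 2 * ℓ ≤ m) (hme : Even m)
    (𝔷 : ℂ) (h𝔷 : 0 < 𝔷.im) (z : ℂ) (hz : 0 < z.im)
    (hy : ∀ M : SL2Z, (act M 𝔷).im < z.im) :
    Hder m ℓ r 𝔷 z = 2 * (π : ℂ) * Complex.I *
      ∑' n : ℕ, (∑' p : CoprimePair,
        (((Complex.normSq ((p.1.1 : ℂ) * 𝔷 + (p.1.2 : ℂ)) / 𝔷.im) ^ ℓ : ℝ) : ℂ) *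
          (2 * (π : ℂ) * Complex.I * (n : ℂ)) ^ r * Bcd m p.1.1 p.1.2 𝔷 n) * qexp z ^ n := by
  classical
  have hπ := Real.pi_pos
  have him : ∀ p : CoprimePair, (wpt 𝔷 p).im < z.im := by
    intro p
    obtain ⟨M, hM⟩ := exists_sl2 (𝔷 := 𝔷) p
    rw [← hM]
    exact hy M
  obtain ⟨T, hT1, hT2⟩ : ∃ T : ℝ, (∀ p : CoprimePair, (wpt 𝔷 p).im ≤ T) ∧ T < z.im := by
    set S : Set CoprimePair := {p | z.im / 2 < (wpt 𝔷 p).im} with hS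
    have hfinS : S.Finite := by
      apply (finite_small h𝔷 (𝔷.im / (z.im / 2))).subset
      intro p hp
      simp only [hS, Set.mem_setOf_eq] at hp ⊢
      have hN : 0 < Complex.normSq (Apt 𝔷 p) := Complex.normSq_pos.mpr (Apt_ne h𝔷 p)
      rw [wpt_im h𝔷 p] at hp
      have h1 : z.im / 2 * Complex.normSq (Apt 𝔷 p) < 𝔷.im := (lt_div_iff₀ hN).mp hp
      rw [le_div_iff₀ (by positivity : (0:ℝ) < z.im / 2)]
      nlinarith
    set img : Set ℝ := insert (z.im / 2) ((fun p => (wpt 𝔷 p).im) '' S) with himg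
    have hfin2 : img.Finite := (hfinS.image _).insert _
    have hne : img.Nonempty := ⟨z.im / 2, Set.mem_insert _ _⟩
    refine ⟨sSup img, ?_, ?_⟩
    · intro p
      by_cases hp : z.im / 2 < (wpt 𝔷 p).im
      · exact le_csSup hfin2.bddAbove (Set.mem_insert_of_mem _ ⟨p, hp, rfl⟩)
      · exact le_trans (not_lt.mp hp) (le_csSup hfin2.bddAbove (Set.mem_insert _ _))
    · rcases Set.mem_insert_iff.mp (hne.csSup_mem hfin2) with h | h
      · rw [h]; linarith
      · obtain ⟨p, _, hp⟩ := h
        rw [← hp]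
        exact him p
  set δ : ℝ := (z.im - T) / 2 with hδ
  have hδ0 : 0 < δ := by rw [hδ]; linarith
  set T' : ℝ := T + δ with hT'
  set t : Set ℂ := {v | T' < v.im} with ht
  have ht_open : IsOpen t := isOpen_lt continuous_const Complex.continuous_im
  have ht_conn : IsPreconnected t := (convex_halfSpace_im_gt T').isPreconnected
  have hzt : z ∈ t := by
    simp only [ht, Set.mem_setOf_eq, hT', hδ]
    linarith
  set ρ : ℝ := Real.exp (-(2 * π * δ)) with hρ
  have hρ1 : ρ < 1 := by
    rw [hρ]
    have : -(2 * π * δ) < 0 := by nlinarith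
    calc Real.exp (-(2 * π * δ)) < Real.exp 0 := Real.exp_lt_exp.mpr this
    _ = 1 := Real.exp_zero
  have hρ0 : 0 ≤ ρ := (Real.exp_pos _).le
  set u : ℕ → CoprimePair × ℕ → ℝ :=
    fun k x => ‖cco m ℓ 𝔷 x.1‖ * ((2 * π) ^ k * ((x.2 : ℝ) ^ k * ρ ^ x.2)) with hu
  have hu_sum : ∀ k, Summable (u k) := by
    intro k
    simp only [hu]
    exact Summable.mul_of_nonneg (summable_cco h𝔷 hm)
      (Summable.mul_left ((2 * π) ^ k)
        (summable_pow_mul_geometric_of_norm_lt_one k (by rwa [Real.norm_of_nonneg hρ0])))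
      (fun p => norm_nonneg _) (fun n => by positivity)
  have hbound : ∀ k (x : CoprimePair × ℕ), ∀ v ∈ t, ‖Eterm m ℓ 𝔷 k x v‖ ≤ u k x := by
    intro k x v hv
    rw [norm_Eterm]
    have hv' : T' < v.im := hv
    have hw := hT1 x.1
    have h1 : Real.exp (2 * π * x.2 * (wpt 𝔷 x.1).im) * Real.exp (-(2 * π * x.2 * v.im)) ≤
        ρ ^ x.2 := by
      rw [← Real.exp_add, hρ, ← Real.exp_nat_mul]
      apply Real.exp_le_exp.mpr
      have hn0 : (0:ℝ) ≤ 2 * π * x.2 := by positivity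
      nlinarith [mul_le_mul_of_nonneg_left
        (by linarith : (wpt 𝔷 x.1).im - v.im ≤ -δ) hn0]
    calc (2 * π * (x.2 : ℝ)) ^ k * (‖cco m ℓ 𝔷 x.1‖ *
          (Real.exp (2 * π * x.2 * (wpt 𝔷 x.1).im) * Real.exp (-(2 * π * x.2 * v.im))))
        ≤ (2 * π * (x.2 : ℝ)) ^ k * (‖cco m ℓ 𝔷 x.1‖ * ρ ^ x.2) := by gcongr
      _ = u k x := by rw [hu, mul_pow]; ring
  have hsummable : ∀ k, ∀ v ∈ t, Summable (fun x : CoprimePair × ℕ => Eterm m ℓ 𝔷 k x v) :=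
    fun k v hv => Summable.of_norm_bounded (hu_sum k) (fun x => hbound k x v hv)
  have key : ∀ k, ∀ v ∈ t, iteratedDeriv k (Hml m ℓ 𝔷) v =
      2 * (π : ℂ) * Complex.I * ∑' x : CoprimePair × ℕ, Eterm m ℓ 𝔷 k x v := by
    intro k
    induction k with
    | zero =>
      intro v hv
      rw [iteratedDeriv_zero]
      unfold Hml
      congr 1
      have hterm : ∀ p : CoprimePair,
          ((((moeb p.1.1 p.1.2 𝔷).im ^ ℓ)⁻¹ : ℝ) : ℂ) *
            (((p.1.1 : ℂ) * 𝔷 + (p.1.2 : ℂ)) ^ m)⁻¹ *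
            (1 - Complex.exp (2 * (π : ℂ) * Complex.I * (v - moeb p.1.1 p.1.2 𝔷)))⁻¹ =
          ∑' n : ℕ, Eterm m ℓ 𝔷 0 (p, n) v := by
        intro p
        have hwim : (wpt 𝔷 p).im ≤ T := hT1 p
        have hvim : T' < v.im := hv
        have hξ : ‖Complex.exp (2 * (π : ℂ) * Complex.I * (v - wpt 𝔷 p))‖ < 1 := by
          rw [Complex.norm_exp]
          have h2 : (2 * (π : ℂ) * Complex.I) = ((2 * π : ℝ) : ℂ) * Complex.I := by
            push_cast; ring
          rw [h2, mul_assoc, Complex.re_ofReal_mul, Complex.I_mul_re]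
          have h3 : 2 * π * -(v - wpt 𝔷 p).im < 0 := by
            simp only [Complex.sub_im]
            nlinarith
          calc Real.exp (2 * π * -(v - wpt 𝔷 p).im) < Real.exp 0 := Real.exp_lt_exp.mpr h3
          _ = 1 := Real.exp_zero
        have hcast : ((((wpt 𝔷 p).im ^ ℓ)⁻¹ : ℝ) : ℂ) =
            (((Complex.normSq (Apt 𝔷 p) / 𝔷.im) ^ ℓ : ℝ) : ℂ) := by
          rw [wpt_im h𝔷 p, ← inv_pow, inv_div]
        unfold wpt at hξ hcast
        unfold Apt at hcast
        rw [hcast, ← tsum_geometric_of_norm_lt_one hξ, ← tsum_mul_left]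
        refine tsum_congr fun n => ?_
        rw [← Complex.exp_nat_mul]
        have harg : ((n : ℂ)) * (2 * (π : ℂ) * Complex.I * (v - moeb p.1.1 p.1.2 𝔷)) =
            -(mu n) * (moeb p.1.1 p.1.2 𝔷) + mu n * v := by
          unfold mu; push_cast; ring
        rw [harg, Complex.exp_add]
        unfold Eterm cco Apt wpt
        rw [pow_zero]
        ring
      exact (tsum_congr hterm).trans
        (Summable.tsum_prod' (hsummable 0 v hv) (hsummable 0 v hv).prod_factor).symm
    | succ k ih =>
      intro v hv
      rw [iteratedDeriv_succ]
      have hev : iteratedDeriv k (Hml m ℓ 𝔷) =ᶠ[nhds v]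
          fun w => 2 * (π : ℂ) * Complex.I * ∑' x : CoprimePair × ℕ, Eterm m ℓ 𝔷 k x w := by
        filter_upwards [ht_open.mem_nhds hv] with w hw
        exact ih w hw
      rw [hev.deriv_eq]
      have hG : HasDerivAt (fun w => ∑' x : CoprimePair × ℕ, Eterm m ℓ 𝔷 k x w)
          (∑' x : CoprimePair × ℕ, Eterm m ℓ 𝔷 (k + 1) x v) v :=
        hasDerivAt_tsum_of_isPreconnected (hu_sum (k + 1)) ht_open ht_conn
          (fun x w _ => Eterm_hasDeriv m ℓ 𝔷 k x w) (fun x w hw => hbound (k + 1) x w hw)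
          hzt (hsummable k z hzt) hv
      exact (hG.const_mul (2 * (π : ℂ) * Complex.I)).deriv
  unfold Hder
  rw [key r z hzt]
  congr 1
  have hswap : (∑' x : CoprimePair × ℕ, Eterm m ℓ 𝔷 r x z) =
      ∑' n : ℕ, ∑' p : CoprimePair, Eterm m ℓ 𝔷 r (p, n) z := by
    rw [← (Equiv.prodComm ℕ CoprimePair).tsum_eq
      (fun x : CoprimePair × ℕ => Eterm m ℓ 𝔷 r x z)]
    exact Summable.tsum_prod' (hsummable r z hzt).prod_symm
      (hsummable r z hzt).prod_symm.prod_factor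
  rw [hswap]
  refine tsum_congr fun n => ?_
  rw [← tsum_mul_right]
  refine tsum_congr fun p => ?_
  rw [Bcd_eq h𝔷 p n]
  have hq : qexp z ^ n = Complex.exp (mu n * z) := by
    rw [qexp, ← Complex.exp_nat_mul]
    congr 1
    unfold mu
    ring
  rw [hq]
  unfold Eterm cco Apt mu
  ring

end

end RamanujanMero
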